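/- Let n be a positive integer and α ∈ (0,1) with αn ∈ ℤ and m := 1/α ∈ ℤ. Then for every integer k with 0 ≤ k ≤ n, min(αk, 1) − 1 + C(n − αn, k)/C(n, k) ≤ C(n − αn, m)/C(n, m), where C(a,b) denotes the binomial coefficient with the convention C(a,b) = 0 when b > a. -/

import Mathlib

private lemma aux_key8 (n a j : ℕ) (ha : 1 ≤ a) :
    n * (n - a).choose j ≤ (n - j) * n.choose j := by
  rcases Nat.eq_zero_or_pos n with rfl | hn
  · simp
  have h1 : (n - a).choose j ≤ (n - 1).choose j :=
    Nat.choose_le_choose j (Nat.sub_le_sub_left ha n)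
  have h2 : n * (n - 1).choose j = n.choose (j + 1) * (j + 1) := by
    have h := Nat.add_one_mul_choose_eq (n - 1) j
    rw [show n - 1 + 1 = n by omega] at h
    exact h
  have h3 : n.choose (j + 1) * (j + 1) = n.choose j * (n - j) :=
    Nat.choose_succ_right_eq n j
  calc n * (n - a).choose j ≤ n * (n - 1).choose j := Nat.mul_le_mul_left n h1
    _ = n.choose j * (n - j) := by rw [h2, h3]
    _ = (n - j) * n.choose j := Nat.mul_comm _ _

private lemma aux_mono8 (n a j : ℕ) :
    (n - a).choose (j + 1) * n.choose j ≤ (n - a).choose j * n.choose (j + 1) := by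
  apply Nat.le_of_mul_le_mul_right _ (Nat.succ_pos j)
  have h1 := Nat.choose_succ_right_eq (n - a) j
  have h2 := Nat.choose_succ_right_eq n j
  have hle : n - a - j ≤ n - j := Nat.sub_le_sub_right (Nat.sub_le n a) j
  calc (n - a).choose (j + 1) * n.choose j * (j + 1)
      = ((n - a).choose (j + 1) * (j + 1)) * n.choose j := by ring
    _ = (n - a).choose j * (n - a - j) * n.choose j := by rw [h1]
    _ ≤ (n - a).choose j * (n - j) * n.choose j := by
        exact Nat.mul_le_mul_right _ (Nat.mul_le_mul_left _ hle)
    _ = (n - a).choose j * (n.choose (j + 1) * (j + 1)) := by rw [h2]; ring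
    _ = (n - a).choose j * n.choose (j + 1) * (j + 1) := by ring

private lemma aux_stepnat8 (n a j : ℕ) (ha : 1 ≤ a) (hj : j + 1 ≤ n) :
    n * ((n - a).choose j * n.choose (j + 1)) ≤
      a * (n.choose j * n.choose (j + 1)) + n * ((n - a).choose (j + 1) * n.choose j) := by
  apply Nat.le_of_mul_le_mul_right _ (Nat.succ_pos j)
  have h1 := Nat.choose_succ_right_eq (n - a) j
  have h2 := Nat.choose_succ_right_eq n j
  rcases le_or_gt j (n - a) with hja | hja
  · -- n - j = (n - a - j) + min a (n - j), and here use key lemma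
    have hkey := aux_key8 n a j ha
    set t := min a (n - j) with ht
    have hsplit : n - j = (n - a - j) + t := by omega
    have hmin : t ≤ a := Nat.min_le_left _ _
    calc n * ((n - a).choose j * n.choose (j + 1)) * (j + 1)
        = n * ((n - a).choose j * (n.choose (j + 1) * (j + 1))) := by ring
      _ = n * ((n - a).choose j * (n.choose j * (n - j))) := by rw [h2]
      _ = n * ((n - a).choose j * (n.choose j * (n - a - j)))
            + (n * (n - a).choose j) * t * n.choose j := by
          rw [hsplit]; ring
      _ ≤ n * ((n - a).choose j * (n.choose j * (n - a - j)))
            + ((n - j) * n.choose j) * a * n.choose j := by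
          gcongr
      _ = a * (n.choose j * (n.choose j * (n - j)))
            + n * (((n - a).choose j * (n - a - j)) * n.choose j) := by ring
      _ = a * (n.choose j * (n.choose (j + 1) * (j + 1)))
            + n * (((n - a).choose (j + 1) * (j + 1)) * n.choose j) := by rw [h1, h2]
      _ = (a * (n.choose j * n.choose (j + 1))
            + n * ((n - a).choose (j + 1) * n.choose j)) * (j + 1) := by ring
  · have h0 : (n - a).choose j = 0 := Nat.choose_eq_zero_of_lt hja
    simp [h0]

private lemma aux_step8 (n a j : ℕ) (ha : 1 ≤ a) (hj : j + 1 ≤ n) :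
    ((n - a).choose j : ℝ) / (n.choose j : ℝ)
      - ((n - a).choose (j + 1) : ℝ) / (n.choose (j + 1) : ℝ) ≤ (a : ℝ) / n := by
  have hn : 0 < n := lt_of_lt_of_le (Nat.succ_pos j) hj
  have hD0 : 0 < (n.choose j : ℝ) := by
    exact_mod_cast Nat.choose_pos (le_trans (Nat.le_succ j) hj)
  have hD1 : 0 < (n.choose (j + 1) : ℝ) := by exact_mod_cast Nat.choose_pos hj
  have hnR : 0 < (n : ℝ) := by exact_mod_cast hn
  have H := aux_stepnat8 n a j ha hj
  have HR : (n : ℝ) * ((n - a).choose j * n.choose (j + 1)) ≤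
      a * (n.choose j * n.choose (j + 1)) + n * ((n - a).choose (j + 1) * n.choose j) := by
    exact_mod_cast H
  rw [div_sub_div _ _ hD0.ne' hD1.ne', div_le_div_iff₀ (by positivity) hnR]
  nlinarith [HR]

private lemma aux_mono_real8 (n a : ℕ) : ∀ d j, j + d ≤ n →
    ((n - a).choose (j + d) : ℝ) / (n.choose (j + d) : ℝ) ≤
      ((n - a).choose j : ℝ) / (n.choose j : ℝ) := by
  intro d
  induction d with
  | zero => intro j _; exact le_refl _
  | succ d ih =>
    intro j hj
    have h1 : ((n - a).choose (j + 1) : ℝ) / (n.choose (j + 1) : ℝ) ≤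
        ((n - a).choose j : ℝ) / (n.choose j : ℝ) := by
      have hD0 : 0 < (n.choose j : ℝ) := by
        exact_mod_cast Nat.choose_pos (by omega)
      have hD1 : 0 < (n.choose (j + 1) : ℝ) := by
        exact_mod_cast Nat.choose_pos (by omega)
      rw [div_le_div_iff₀ hD1 hD0]
      exact_mod_cast aux_mono8 n a j
    have h2 := ih (j + 1) (by omega)
    rw [show j + (d + 1) = j + 1 + d by omega]
    exact le_trans h2 h1

private lemma aux_sum8 (n a : ℕ) (ha : 1 ≤ a) : ∀ d j, j + d ≤ n →
    ((n - a).choose j : ℝ) / (n.choose j : ℝ)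
      - ((n - a).choose (j + d) : ℝ) / (n.choose (j + d) : ℝ) ≤ d * ((a : ℝ) / n) := by
  intro d
  induction d with
  | zero => intro j _; simp
  | succ d ih =>
    intro j hj
    have h1 := aux_step8 n a j ha (by omega)
    have h2 := ih (j + 1) (by omega)
    rw [show j + (d + 1) = j + 1 + d by omega]
    push_cast
    push_cast at h2
    linarith

theorem stmt_8 (n : ℕ) (hn : 0 < n) (α : ℝ) (hα : α ∈ Set.Ioo (0 : ℝ) 1)
    (a m : ℕ) (ha0 : 0 < a) (hm0 : 0 < m)
    (ha : (a : ℝ) = α * n) (hm : (m : ℝ) = 1 / α)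
    (k : ℕ) (hk : k ≤ n) :
    min (α * k) 1 - 1 + ((n - a).choose k : ℝ) / (n.choose k : ℝ) ≤
      ((n - a).choose m : ℝ) / (n.choose m : ℝ) := by
  obtain ⟨hα0, hα1⟩ := hα
  have hnR : 0 < (n : ℝ) := by exact_mod_cast hn
  have hmR : 0 < (m : ℝ) := by exact_mod_cast hm0
  have hαm : α * m = 1 := by rw [hm]; field_simp
  have hamn : a * m = n := by
    have : (a : ℝ) * m = n := by rw [ha, hm]; field_simp
    exact_mod_cast this
  have hmn : m ≤ n := by nlinarith [hamn]
  have hαan : α = (a : ℝ) / n := by rw [ha]; field_simp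
  rcases le_or_gt m k with h | h
  · -- min = 1, use monotonicity
    have hmin : min (α * k) 1 = 1 := by
      apply min_eq_right
      have : (m : ℝ) ≤ k := by exact_mod_cast h
      nlinarith
    rw [hmin]
    have := aux_mono_real8 n a (k - m) m (by omega)
    rw [show m + (k - m) = k by omega] at this
    linarith
  · -- min = α k
    have hkm : (k : ℝ) ≤ m := by exact_mod_cast h.le
    have hmin : min (α * k) 1 = α * k := by
      apply min_eq_left; nlinarith
    rw [hmin]
    have hsum := aux_sum8 n a ha0 (m - k) k (by omega)
    rw [show k + (m - k) = m by omega] at hsum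
    have hcast : ((m - k : ℕ) : ℝ) = (m : ℝ) - k := by
      push_cast [Nat.cast_sub h.le]; ring
    rw [hcast, ← hαan] at hsum
    nlinarith
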